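/- Let f be a real homogeneous polynomial of degree d ≥ 2 in n variables and K ⊆ ℝ^n a proper convex cone. Suppose f(a) > 0 for all nonzero a ∈ K, and for a ∈ ℝ^n let Q_a = H_f(a) denote the Hessian matrix of f evaluated at a. Then the following are equivalent: (a) f is strictly log-concave at every nonzero point of K; (b) for every nonzero a ∈ K, the quadratic form x ↦ xᵀQ_a x is negative definite on the hyperplane {x : xᵀ(Q_a a) = 0}; (c) for every nonzero a ∈ K, the matrix Q_a is nonsingular and has exactly one positive eigenvalue (counted with multiplicity). -/

import Mathlib

open Matrix

/-- The number of positive eigenvalues (with multiplicity) of a real symmetric matrix. -/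
noncomputable def posEigCount {n : ℕ} (Q : Matrix (Fin n) (Fin n) ℝ) : ℕ :=
  @dite _ Q.IsHermitian (Classical.dec _)
    (fun h => (Finset.univ.filter fun i => 0 < h.eigenvalues i).card)
    (fun _ => 0)

/-- A proper convex cone: a closed convex cone that is pointed and solid. -/
def IsProperCone {n : ℕ} (K : Set (Fin n → ℝ)) : Prop :=
  Convex ℝ K ∧ (∀ c : ℝ, 0 ≤ c → ∀ x ∈ K, c • x ∈ K) ∧
    IsClosed K ∧ K ∩ (-K) = {0} ∧ (interior K).Nonempty

/-- The dual cone of `K` with respect to the standard inner product. -/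
def dualConeSet {n : ℕ} (K : Set (Fin n → ℝ)) : Set (Fin n → ℝ) :=
  {y | ∀ x ∈ K, 0 ≤ y ⬝ᵥ x}

/-- The quadratic form with symmetric matrix `Q` is `K`-Lorentzian: `Q` has exactly one
positive eigenvalue and `yᵀQx > 0` for all `x, y` in the interior of `K`. -/
def IsLorentzianMatrix {n : ℕ} (K : Set (Fin n → ℝ)) (Q : Matrix (Fin n) (Fin n) ℝ) : Prop :=
  posEigCount Q = 1 ∧ ∀ x ∈ interior K, ∀ y ∈ interior K, 0 < y ⬝ᵥ (Q *ᵥ x)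

/-- A nonzero `v ∈ K` spans an extreme ray of `K`. -/
def SpansExtremeRay {n : ℕ} (K : Set (Fin n → ℝ)) (v : Fin n → ℝ) : Prop :=
  v ∈ K ∧ v ≠ 0 ∧ ∀ x ∈ K, ∀ y ∈ K, v = x + y →
    (∃ c : ℝ, 0 ≤ c ∧ x = c • v) ∧ (∃ c : ℝ, 0 ≤ c ∧ y = c • v)

open MvPolynomial

/-- Directional derivative `D_a f = Σᵢ aᵢ ∂f/∂xᵢ` of a polynomial. -/
noncomputable def dirDeriv {n : ℕ} (a : Fin n → ℝ) (f : MvPolynomial (Fin n) ℝ) :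
    MvPolynomial (Fin n) ℝ :=
  ∑ i, a i • pderiv i f

/-- The gradient of a polynomial at a point. -/
noncomputable def polyGrad {n : ℕ} (f : MvPolynomial (Fin n) ℝ) (x : Fin n → ℝ) :
    Fin n → ℝ :=
  fun i => eval x (pderiv i f)

/-- The Hessian matrix of a polynomial at a point. -/
noncomputable def polyHess {n : ℕ} (f : MvPolynomial (Fin n) ℝ) (x : Fin n → ℝ) :
    Matrix (Fin n) (Fin n) ℝ :=
  Matrix.of fun i j => eval x (pderiv i (pderiv j f))

/-- The Hessian of `log f` at `x`, namely `(f(x)·H_f(x) − ∇f(x)∇f(x)ᵀ)/f(x)²`. -/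
noncomputable def logHess {n : ℕ} (f : MvPolynomial (Fin n) ℝ) (x : Fin n → ℝ) :
    Matrix (Fin n) (Fin n) ℝ :=
  ((eval x f) ^ 2)⁻¹ • ((eval x f) • polyHess f x -
    Matrix.vecMulVec (polyGrad f x) (polyGrad f x))

/-- `f` is log-concave at `x`: either `f = 0`, or `f(x) > 0` and the Hessian of `log f`
at `x` is negative semidefinite. -/
def LogConcaveAt {n : ℕ} (f : MvPolynomial (Fin n) ℝ) (x : Fin n → ℝ) : Prop :=
  f = 0 ∨ (0 < eval x f ∧ (-(logHess f x)).PosSemidef)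

/-- `f` is strictly log-concave at `x`: `f(x) > 0` and the Hessian of `log f` at `x` is
negative definite. -/
def StrictLogConcaveAt {n : ℕ} (f : MvPolynomial (Fin n) ℝ) (x : Fin n → ℝ) : Prop :=
  0 < eval x f ∧ (-(logHess f x)).PosDef



noncomputable def eV {n : ℕ} {Q : Matrix (Fin n) (Fin n) ℝ} (hQ : Q.IsHermitian) (j : Fin n) :
    Fin n → ℝ := (WithLp.equiv 2 _) (hQ.eigenvectorBasis j)

section Spectral
variable {n : ℕ} {Q : Matrix (Fin n) (Fin n) ℝ} (hQ : Q.IsHermitian)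

lemma dot_sum_smul (x c : Fin n → ℝ) (w : Fin n → (Fin n → ℝ)) :
    x ⬝ᵥ (∑ j, c j • w j) = ∑ j, c j * (x ⬝ᵥ w j) := by
  simp only [dotProduct, Finset.sum_apply, Pi.smul_apply, smul_eq_mul, Finset.mul_sum]
  rw [Finset.sum_comm]
  exact Finset.sum_congr rfl fun j _ => Finset.sum_congr rfl fun i _ => by ring

lemma mulVec_sum_smul (c : Fin n → ℝ) (w : Fin n → (Fin n → ℝ)) :
    Q *ᵥ (∑ j, c j • w j) = ∑ j, c j • (Q *ᵥ w j) := by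
  rw [← Q.mulVecLin_apply, map_sum]
  simp [Matrix.mulVecLin_apply]

lemma inner_eq_dot (u w : EuclideanSpace ℝ (Fin n)) :
    (inner ℝ u w : ℝ) = ((WithLp.equiv 2 _) u) ⬝ᵥ ((WithLp.equiv 2 _) w) := by
  simp [PiLp.inner_apply, dotProduct, WithLp.equiv, Equiv.refl_apply]
  exact Finset.sum_congr rfl fun i _ => mul_comm _ _

lemma eV_dot (i j : Fin n) : eV hQ i ⬝ᵥ eV hQ j = if i = j then 1 else 0 := by
  rw [eV, eV, ← inner_eq_dot]
  exact orthonormal_iff_ite.1 hQ.eigenvectorBasis.orthonormal i j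

lemma repr_eq (z : Fin n → ℝ) : ∑ j, (eV hQ j ⬝ᵥ z) • eV hQ j = z := by
  have h := hQ.eigenvectorBasis.sum_repr' ((WithLp.equiv 2 (Fin n → ℝ)).symm z)
  simp only [inner_eq_dot, Equiv.apply_symm_apply] at h
  simp only [eV]
  have h2 := congrArg (WithLp.equiv 2 (Fin n → ℝ)) h
  simpa using h2

lemma mulVec_eV (j : Fin n) : Q *ᵥ eV hQ j = hQ.eigenvalues j • eV hQ j :=
  hQ.mulVec_eigenvectorBasis j

lemma quad_eq (x z : Fin n → ℝ) :
    x ⬝ᵥ (Q *ᵥ z) = ∑ j, hQ.eigenvalues j * ((eV hQ j ⬝ᵥ x) * (eV hQ j ⬝ᵥ z)) := by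
  calc x ⬝ᵥ (Q *ᵥ z)
      = x ⬝ᵥ (Q *ᵥ ∑ j, (eV hQ j ⬝ᵥ z) • eV hQ j) := by rw [repr_eq]
    _ = x ⬝ᵥ (∑ j, (eV hQ j ⬝ᵥ z) • (hQ.eigenvalues j • eV hQ j)) := by
        rw [mulVec_sum_smul]
        simp only [mulVec_eV]
    _ = x ⬝ᵥ (∑ j, ((eV hQ j ⬝ᵥ z) * hQ.eigenvalues j) • eV hQ j) := by
        simp only [smul_smul]
    _ = ∑ j, ((eV hQ j ⬝ᵥ z) * hQ.eigenvalues j) * (x ⬝ᵥ eV hQ j) := dot_sum_smul _ _ _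
    _ = ∑ j, hQ.eigenvalues j * ((eV hQ j ⬝ᵥ x) * (eV hQ j ⬝ᵥ z)) := by
        refine Finset.sum_congr rfl fun j _ => ?_
        rw [dotProduct_comm x]
        ring

lemma coords_zero {x : Fin n → ℝ} (h : ∀ j, eV hQ j ⬝ᵥ x = 0) : x = 0 := by
  have := repr_eq hQ x
  simp only [h, zero_smul, Finset.sum_const_zero] at this
  exact this.symm

lemma coords_surj (t : Fin n → ℝ) : ∃ x : Fin n → ℝ, ∀ j, eV hQ j ⬝ᵥ x = t j := by
  refine ⟨∑ i, t i • eV hQ i, fun j => ?_⟩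
  rw [dot_sum_smul]
  simp [eV_dot]
end Spectral


lemma mono_key {n : ℕ} (a : Fin n → ℝ) (i : Fin n) (v : Fin n →₀ ℕ) (r : ℝ) :
    a i * eval a (pderiv i (monomial v r)) = (v i : ℝ) * eval a (monomial v r) := by
  rcases Nat.eq_zero_or_pos (v i) with h | h
  · simp [pderiv_monomial, h]
  · obtain ⟨m, hm⟩ : ∃ m, v i = m + 1 := ⟨v i - 1, by omega⟩
    rw [pderiv_monomial, eval_monomial, eval_monomial,
      Finsupp.prod_fintype _ _ (fun j => pow_zero _),
      Finsupp.prod_fintype _ _ (fun j => pow_zero _),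
      ← Finset.mul_prod_erase Finset.univ _ (Finset.mem_univ i),
      ← Finset.mul_prod_erase Finset.univ _ (Finset.mem_univ i)]
    have h1 : ∀ j : Fin n, (v - Finsupp.single i 1 : Fin n →₀ ℕ) j
        = v j - (if i = j then 1 else 0) := by
      intro j; rw [Finsupp.tsub_apply, Finsupp.single_apply]
    have h2 : (Finset.univ.erase i).prod
          (fun j => a j ^ ((v - Finsupp.single i 1 : Fin n →₀ ℕ) j))
        = (Finset.univ.erase i).prod (fun j => a j ^ v j) := by
      apply Finset.prod_congr rfl
      intro j hj
      rw [h1 j, if_neg (Ne.symm (Finset.mem_erase.1 hj).1), Nat.sub_zero]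
    rw [h2, h1 i, if_pos rfl, hm]
    push_cast
    ring_nf

lemma euler_eval {n d : ℕ} {f : MvPolynomial (Fin n) ℝ} (hf : f.IsHomogeneous d)
    (a : Fin n → ℝ) : ∑ i, a i * eval a (pderiv i f) = d * eval a f := by
  have hs : ∀ i, eval a (pderiv i f)
      = ∑ v ∈ f.support, eval a (pderiv i (monomial v (coeff v f))) := by
    intro i
    conv_lhs => rw [f.as_sum]
    rw [map_sum, map_sum]
  have he : eval a f = ∑ v ∈ f.support, eval a (monomial v (coeff v f)) := by
    conv_lhs => rw [f.as_sum]
    rw [map_sum]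
  simp only [hs, he, Finset.mul_sum]
  rw [Finset.sum_comm]
  apply Finset.sum_congr rfl
  intro v hv
  have hdeg : v.degree = d := by
    by_contra hne
    exact (MvPolynomial.mem_support_iff.1 hv) (hf.coeff_eq_zero hne)
  calc ∑ i, a i * eval a (pderiv i (monomial v (coeff v f)))
      = ∑ i, (v i : ℝ) * eval a (monomial v (coeff v f)) := by
        exact Finset.sum_congr rfl fun i _ => mono_key a i v _
    _ = (∑ i, (v i : ℝ)) * eval a (monomial v (coeff v f)) := by rw [Finset.sum_mul]
    _ = d * eval a (monomial v (coeff v f)) := by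
        congr 1
        rw [← hdeg, Finsupp.degree_apply]
        push_cast
        exact (Finset.sum_subset (Finset.subset_univ _)
          (fun x _ hx => by simp [Finsupp.notMem_support_iff.1 hx])).symm

lemma pderiv_comm' {n : ℕ} (i j : Fin n) (f : MvPolynomial (Fin n) ℝ) :
    pderiv i (pderiv j f) = pderiv j (pderiv i f) := by
  induction f using MvPolynomial.induction_on with
  | C a => simp
  | add p q hp hq => simp [hp, hq]
  | mul_X p k hp =>
    simp only [pderiv_mul, hp, pderiv_X, Pi.single_apply, map_add]
    split_ifs <;> simp <;> ring


lemma degree_eq_sum_univ {n : ℕ} (v : Fin n →₀ ℕ) : v.degree = ∑ j, v j :=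
  Finset.sum_subset (Finset.subset_univ _)
    (fun x _ hx => Finsupp.notMem_support_iff.1 hx)

lemma isHomog_pderiv {n d : ℕ} {f : MvPolynomial (Fin n) ℝ} (hf : f.IsHomogeneous d)
    (i : Fin n) : (pderiv i f).IsHomogeneous (d - 1) := by
  have : pderiv i f = ∑ v ∈ f.support, pderiv i (monomial v (coeff v f)) := by
    conv_lhs => rw [f.as_sum]
    rw [map_sum]
  rw [this]
  apply IsHomogeneous.sum
  intro v hv
  rw [pderiv_monomial]
  rcases Nat.eq_zero_or_pos (v i) with h | h
  · rw [h]; simp only [Nat.cast_zero, mul_zero, map_zero]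
    exact isHomogeneous_zero _ _ _
  · apply isHomogeneous_monomial
    have hdeg : v.degree = d := by
      by_contra hne
      exact (MvPolynomial.mem_support_iff.1 hv) (hf.coeff_eq_zero hne)
    have h1 : ∀ j : Fin n, (v - Finsupp.single i 1 : Fin n →₀ ℕ) j
        = v j - (if i = j then 1 else 0) := by
      intro j; rw [Finsupp.tsub_apply, Finsupp.single_apply]
    rw [degree_eq_sum_univ, ← hdeg, degree_eq_sum_univ]
    rw [← Finset.add_sum_erase Finset.univ _ (Finset.mem_univ i),
      ← Finset.add_sum_erase Finset.univ v (Finset.mem_univ i)]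
    have h2 : ∑ j ∈ Finset.univ.erase i, (v - Finsupp.single i 1 : Fin n →₀ ℕ) j
        = ∑ j ∈ Finset.univ.erase i, v j := by
      apply Finset.sum_congr rfl
      intro j hj
      rw [h1 j, if_neg (Ne.symm (Finset.mem_erase.1 hj).1), Nat.sub_zero]
    rw [h2, h1 i, if_pos rfl]
    omega

lemma sum_two_ite {n : ℕ} {j k : Fin n} (hjk : j ≠ k) (u w : ℝ) :
    ∑ i, (if i = j then u else if i = k then w else 0) = u + w := by
  have h : ∀ i : Fin n, (if i = j then u else if i = k then w else 0)
      = (if i = j then u else 0) + (if i = k then w else 0) := by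
    intro i
    by_cases h1 : i = j
    · subst h1; rw [if_pos rfl, if_pos rfl, if_neg hjk, add_zero]
    · rw [if_neg h1, if_neg h1, zero_add]
  rw [Finset.sum_congr rfl fun i _ => h i, Finset.sum_add_distrib,
    Finset.sum_ite_eq' Finset.univ j (fun _ => u), Finset.sum_ite_eq' Finset.univ k (fun _ => w)]
  simp

lemma la_key {n : ℕ} {Q : Matrix (Fin n) (Fin n) ℝ} (hQ : Q.IsHermitian) {a : Fin n → ℝ}
    (ha : 0 < a ⬝ᵥ (Q *ᵥ a)) :
    (∀ x : Fin n → ℝ, x ≠ 0 → x ⬝ᵥ (Q *ᵥ a) = 0 → x ⬝ᵥ (Q *ᵥ x) < 0) ↔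
    (Q.det ≠ 0 ∧ posEigCount Q = 1) := by
  set lam := hQ.eigenvalues with hlam
  set b : Fin n → ℝ := fun i => eV hQ i ⬝ᵥ a with hb
  have hdet : Q.det = ∏ i, lam i := by simpa using hQ.det_eq_prod_eigenvalues
  have haa : a ⬝ᵥ (Q *ᵥ a) = ∑ i, lam i * (b i * b i) := quad_eq hQ a a
  rw [posEigCount, dif_pos hQ]
  constructor
  · intro hcond
    have hpair : ∀ j k, 0 ≤ lam j → 0 ≤ lam k → j ≠ k → False := by
      intro j k hj hk hjk
      obtain ⟨s, t, hst, heq⟩ : ∃ s t : ℝ, ¬(s = 0 ∧ t = 0) ∧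
          lam j * (s * b j) + lam k * (t * b k) = 0 := by
        by_cases h0 : lam j * b j = 0 ∧ lam k * b k = 0
        · exact ⟨1, 0, by simp, by
            rw [show lam j * (1 * b j) = lam j * b j by ring, h0.1]; simp [h0.2]⟩
        · refine ⟨lam k * b k, -(lam j * b j), ?_, by ring⟩
          rintro ⟨h1, h2⟩
          exact h0 ⟨by linarith [neg_eq_zero.mp h2], h1⟩
      obtain ⟨x, hx⟩ := coords_surj hQ (fun i => if i = j then s else if i = k then t else 0)
      have hxj : eV hQ j ⬝ᵥ x = s := by rw [hx j, if_pos rfl]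
      have hxk : eV hQ k ⬝ᵥ x = t := by rw [hx k, if_neg (Ne.symm hjk), if_pos rfl]
      have hxne : x ≠ 0 := by
        intro h0
        rw [h0] at hxj hxk
        exact hst ⟨by simpa using hxj.symm, by simpa using hxk.symm⟩
      have hxa : x ⬝ᵥ (Q *ᵥ a) = 0 := by
        rw [quad_eq hQ x a]
        rw [Finset.sum_congr rfl (fun i _ => show lam i * ((eV hQ i ⬝ᵥ x) * (eV hQ i ⬝ᵥ a))
            = if i = j then lam j * (s * b j) else if i = k then lam k * (t * b k) else 0 from by
          by_cases h1 : i = j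
          · subst h1; rw [if_pos rfl, hxj]
          · rw [if_neg h1, hx i, if_neg h1]
            by_cases h2 : i = k
            · subst h2; rw [if_pos rfl, if_pos rfl]
            · rw [if_neg h2, if_neg h2]; ring), sum_two_ite hjk, heq]
      have hxx : 0 ≤ x ⬝ᵥ (Q *ᵥ x) := by
        rw [quad_eq hQ x x]
        apply Finset.sum_nonneg
        intro i _
        rcases eq_or_ne i j with rfl | h1
        · rw [hxj]; exact mul_nonneg hj (mul_self_nonneg s)
        · rcases eq_or_ne i k with rfl | h2
          · rw [hxk]; exact mul_nonneg hk (mul_self_nonneg t)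
          · rw [hx i, if_neg h1, if_neg h2]; simp
      exact absurd (hcond x hxne hxa) (not_lt.2 hxx)
    obtain ⟨k, hk⟩ : ∃ k, 0 < lam k := by
      by_contra hno
      push_neg at hno
      have : a ⬝ᵥ (Q *ᵥ a) ≤ 0 := by
        rw [haa]
        exact Finset.sum_nonpos fun i _ => mul_nonpos_of_nonpos_of_nonneg (hno i)
          (mul_self_nonneg _)
      linarith
    have hnz : ∀ i, lam i ≠ 0 := by
      intro i hi
      rcases eq_or_ne i k with rfl | hik
      · rw [hi] at hk; exact lt_irrefl _ hk
      · exact hpair i k (le_of_eq hi.symm) (le_of_lt hk) hik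
    constructor
    · rw [hdet]
      exact Finset.prod_ne_zero_iff.2 fun i _ => hnz i
    · rw [Finset.card_eq_one]
      refine ⟨k, Finset.eq_singleton_iff_unique_mem.2 ⟨Finset.mem_filter.2 ⟨Finset.mem_univ _, hk⟩,
        fun i hi => ?_⟩⟩
      by_contra hik
      exact hpair i k (le_of_lt (Finset.mem_filter.1 hi).2) (le_of_lt hk) hik
  · rintro ⟨hdet0, hcard⟩
    rw [Finset.card_eq_one] at hcard
    obtain ⟨j0, hj0⟩ := hcard
    have hj0mem : j0 ∈ Finset.filter (fun i => 0 < lam i) Finset.univ := by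
      rw [hj0]; exact Finset.mem_singleton_self j0
    have hpos0 : 0 < lam j0 := (Finset.mem_filter.1 hj0mem).2
    have hnz : ∀ i, lam i ≠ 0 := by
      rw [hdet] at hdet0
      exact fun i => Finset.prod_ne_zero_iff.1 hdet0 i (Finset.mem_univ i)
    have hneg : ∀ i, i ≠ j0 → lam i < 0 := by
      intro i hi
      rcases lt_or_ge (lam i) 0 with h | h
      · exact h
      · exfalso
        have : i ∈ Finset.filter (fun i => 0 < lam i) Finset.univ :=
          Finset.mem_filter.2 ⟨Finset.mem_univ _, lt_of_le_of_ne h (Ne.symm (hnz i))⟩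
        rw [hj0, Finset.mem_singleton] at this
        exact hi this
    intro x hx0 hxa
    set c : Fin n → ℝ := fun i => eV hQ i ⬝ᵥ x with hc
    rw [quad_eq hQ x a] at hxa
    rw [quad_eq hQ x x]
    set E := Finset.univ.erase j0 with hE
    set A := ∑ i ∈ E, (-lam i) * (c i * c i) with hA
    set B := ∑ i ∈ E, (-lam i) * (b i * b i) with hB
    set Cs := ∑ i ∈ E, (-lam i) * (c i * b i) with hCs
    have hA0 : 0 ≤ A := Finset.sum_nonneg fun i hi => mul_nonneg
      (by linarith [hneg i (Finset.mem_erase.1 hi).1]) (mul_self_nonneg _)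
    have hB0 : 0 ≤ B := Finset.sum_nonneg fun i hi => mul_nonneg
      (by linarith [hneg i (Finset.mem_erase.1 hi).1]) (mul_self_nonneg _)
    have hsplit : ∀ g : Fin n → ℝ, ∑ i, g i = g j0 + ∑ i ∈ E, g i := by
      intro g
      rw [hE, ← Finset.add_sum_erase Finset.univ g (Finset.mem_univ j0)]
    have hBlt : B < lam j0 * (b j0 * b j0) := by
      rw [haa, hsplit] at ha
      have : ∑ i ∈ E, lam i * (b i * b i) = -B := by
        rw [hB, ← Finset.sum_neg_distrib]
        exact Finset.sum_congr rfl fun i _ => by ring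
      rw [this] at ha
      linarith
    have hxa2 : lam j0 * (c j0 * b j0) + ∑ i ∈ E, lam i * (c i * b i) = 0 := by
      rw [← hsplit (fun i => lam i * (c i * b i))]
      exact hxa
    have hxa' : lam j0 * (c j0 * b j0) = Cs := by
      have hEq : ∑ i ∈ E, lam i * (c i * b i) = -Cs := by
        rw [hCs, ← Finset.sum_neg_distrib]
        exact Finset.sum_congr rfl fun i _ => by ring
      rw [hEq] at hxa2
      linarith
    have hCS : Cs ^ 2 ≤ A * B := by
      have key := Finset.sum_mul_sq_le_sq_mul_sq E
        (fun i => Real.sqrt (-lam i) * c i) (fun i => Real.sqrt (-lam i) * b i)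
      have e1 : ∀ i ∈ E, (Real.sqrt (-lam i) * c i) * (Real.sqrt (-lam i) * b i)
          = (-lam i) * (c i * b i) := by
        intro i hi
        have : Real.sqrt (-lam i) * Real.sqrt (-lam i) = -lam i :=
          Real.mul_self_sqrt (by linarith [hneg i (Finset.mem_erase.1 hi).1])
        calc (Real.sqrt (-lam i) * c i) * (Real.sqrt (-lam i) * b i)
            = (Real.sqrt (-lam i) * Real.sqrt (-lam i)) * (c i * b i) := by ring
          _ = (-lam i) * (c i * b i) := by rw [this]
      have e2 : ∀ i ∈ E, (Real.sqrt (-lam i) * c i) ^ 2 = (-lam i) * (c i * c i) := by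
        intro i hi
        have : Real.sqrt (-lam i) * Real.sqrt (-lam i) = -lam i :=
          Real.mul_self_sqrt (by linarith [hneg i (Finset.mem_erase.1 hi).1])
        calc (Real.sqrt (-lam i) * c i) ^ 2
            = (Real.sqrt (-lam i) * Real.sqrt (-lam i)) * (c i * c i) := by ring
          _ = _ := by rw [this]
      have e3 : ∀ i ∈ E, (Real.sqrt (-lam i) * b i) ^ 2 = (-lam i) * (b i * b i) := by
        intro i hi
        have : Real.sqrt (-lam i) * Real.sqrt (-lam i) = -lam i :=
          Real.mul_self_sqrt (by linarith [hneg i (Finset.mem_erase.1 hi).1])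
        calc (Real.sqrt (-lam i) * b i) ^ 2
            = (Real.sqrt (-lam i) * Real.sqrt (-lam i)) * (b i * b i) := by ring
          _ = _ := by rw [this]
      rw [Finset.sum_congr rfl e1, Finset.sum_congr rfl e2, Finset.sum_congr rfl e3] at key
      rw [hCs, hA, hB]
      exact key
    have hgoal : (∑ i, lam i * (c i * c i)) < 0 →
        (∑ i, lam i * ((eV hQ i ⬝ᵥ x) * (eV hQ i ⬝ᵥ x))) < 0 := fun h => h
    apply hgoal
    rw [hsplit]
    have hrest : ∑ i ∈ E, lam i * (c i * c i) = -A := by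
      rw [hA, ← Finset.sum_neg_distrib]
      exact Finset.sum_congr rfl fun i _ => by ring
    rw [hrest]
    -- goal : lam j0 * (c j0 * c j0) + -A < 0
    rcases eq_or_lt_of_le hA0 with hAz | hApos
    · exfalso
      have hcz : ∀ i ∈ E, c i = 0 := by
        intro i hi
        have hterm := (Finset.sum_eq_zero_iff_of_nonneg fun i hi => mul_nonneg
          (by linarith [hneg i (Finset.mem_erase.1 hi).1] : (0:ℝ) ≤ -lam i)
          (mul_self_nonneg (c i))).1 hAz.symm i hi
        have hlne : -lam i ≠ 0 := by
          have := hneg i (Finset.mem_erase.1 hi).1; intro h; linarith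
        have := mul_eq_zero.1 hterm
        rcases this with h | h
        · exact absurd h hlne
        · exact mul_self_eq_zero.1 h
      have hcj0 : c j0 ≠ 0 := by
        intro h
        apply hx0
        apply coords_zero hQ
        intro j
        rcases eq_or_ne j j0 with rfl | hj
        · exact h
        · exact hcz j (Finset.mem_erase.2 ⟨hj, Finset.mem_univ _⟩)
      have hCsz : Cs = 0 := by
        rw [hCs]
        exact Finset.sum_eq_zero fun i hi => by rw [hcz i hi]; ring
      rw [hCsz] at hxa'
      have hbj0 : b j0 = 0 := by
        rcases mul_eq_zero.1 hxa' with h | h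
        · exact absurd h (hnz j0)
        · rcases mul_eq_zero.1 h with h' | h'
          · exact absurd h' hcj0
          · exact h'
      rw [hbj0] at hBlt
      simp at hBlt
      linarith
    · have hb2 : 0 < lam j0 * (b j0 * b j0) := lt_of_le_of_lt hB0 hBlt
      have hbb : 0 < b j0 * b j0 := by
        rcases lt_or_ge 0 (b j0 * b j0) with h | h
        · exact h
        · exfalso; nlinarith
      have h1 : A * B < A * (lam j0 * (b j0 * b j0)) := by
        exact mul_lt_mul_of_pos_left hBlt hApos
      have h2 : (lam j0 * (c j0 * c j0)) * (lam j0 * (b j0 * b j0)) ≤ A * B := by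
        calc (lam j0 * (c j0 * c j0)) * (lam j0 * (b j0 * b j0))
            = (lam j0 * (c j0 * b j0)) ^ 2 := by ring
          _ = Cs ^ 2 := by rw [hxa']
          _ ≤ A * B := hCS
      have h3 : (lam j0 * (c j0 * c j0)) * (lam j0 * (b j0 * b j0))
          < A * (lam j0 * (b j0 * b j0)) := lt_of_le_of_lt h2 h1
      have := lt_of_mul_lt_mul_right h3 (le_of_lt hb2)
      linarith







section Bridge
variable {n d : ℕ} {f : MvPolynomial (Fin n) ℝ}

lemma hess_herm (f : MvPolynomial (Fin n) ℝ) (a : Fin n → ℝ) : (polyHess f a).IsHermitian := by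
  rw [Matrix.IsHermitian]
  ext i j
  simp only [Matrix.conjTranspose_apply, polyHess, Matrix.of_apply, star_trivial]
  rw [pderiv_comm']

lemma dot_symm {Q : Matrix (Fin n) (Fin n) ℝ} (hQ : Q.IsHermitian) (x y : Fin n → ℝ) :
    x ⬝ᵥ (Q *ᵥ y) = y ⬝ᵥ (Q *ᵥ x) := by
  rw [quad_eq hQ x y, quad_eq hQ y x]
  exact Finset.sum_congr rfl fun j _ => by ring

lemma vecMulVec_mulVec' (u v x : Fin n → ℝ) :
    Matrix.vecMulVec u v *ᵥ x = (v ⬝ᵥ x) • u := by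
  funext i
  simp only [Matrix.vecMulVec, Matrix.mulVec, dotProduct, Pi.smul_apply, smul_eq_mul,
    Matrix.of_apply, Finset.mul_sum]
  rw [Finset.sum_mul]
  exact Finset.sum_congr rfl fun j _ => by ring

lemma hessian_mulVec (hd : 1 ≤ d) (hf : f.IsHomogeneous d) (a : Fin n → ℝ) :
    polyHess f a *ᵥ a = ((d : ℝ) - 1) • polyGrad f a := by
  funext i
  have : (polyHess f a *ᵥ a) i = ∑ j, a j * eval a (pderiv j (pderiv i f)) := by
    simp only [Matrix.mulVec, dotProduct, polyHess, Matrix.of_apply]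
    exact Finset.sum_congr rfl fun j _ => by rw [pderiv_comm']; ring
  rw [this, euler_eval (isHomog_pderiv hf i) a]
  simp only [Pi.smul_apply, smul_eq_mul, polyGrad]
  congr 1
  rw [Nat.cast_sub hd, Nat.cast_one]

lemma grad_dot (hf : f.IsHomogeneous d) (a : Fin n → ℝ) :
    a ⬝ᵥ polyGrad f a = d * eval a f :=
  euler_eval hf a

lemma quadM (f : MvPolynomial (Fin n) ℝ) (a x : Fin n → ℝ) :
    x ⬝ᵥ ((-(logHess f a)) *ᵥ x) = ((eval a f) ^ 2)⁻¹ *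
      ((x ⬝ᵥ polyGrad f a) ^ 2 - (eval a f) * (x ⬝ᵥ (polyHess f a *ᵥ x))) := by
  rw [logHess, Matrix.neg_mulVec, Matrix.smul_mulVec, Matrix.sub_mulVec,
    Matrix.smul_mulVec, vecMulVec_mulVec']
  rw [dotProduct_neg, dotProduct_smul, dotProduct_sub, dotProduct_smul, dotProduct_smul]
  rw [dotProduct_comm x (polyGrad f a)]
  simp only [smul_eq_mul]
  ring
end Bridge

section Ptwise
variable {n d : ℕ} {f : MvPolynomial (Fin n) ℝ}

lemma logHess_herm (f : MvPolynomial (Fin n) ℝ) (a : Fin n → ℝ) :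
    (-(logHess f a)).IsHermitian := by
  rw [Matrix.IsHermitian]
  ext i j
  simp only [logHess, Matrix.conjTranspose_apply, Matrix.neg_apply, Matrix.smul_apply,
    Matrix.sub_apply, Matrix.vecMulVec_apply, polyHess, Matrix.of_apply, star_trivial,
    smul_eq_mul]
  rw [pderiv_comm']
  ring

lemma ptwise1 (hd : 2 ≤ d) (hf : f.IsHomogeneous d) {a : Fin n → ℝ}
    (hfa : 0 < eval a f) :
    StrictLogConcaveAt f a ↔ ∀ x : Fin n → ℝ, x ≠ 0 →
      x ⬝ᵥ (polyHess f a *ᵥ a) = 0 → x ⬝ᵥ (polyHess f a *ᵥ x) < 0 := by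
  have hd1 : 1 ≤ d := le_trans (by norm_num) hd
  have he : (0:ℝ) < (d:ℝ) - 1 := by
    have : (2:ℝ) ≤ (d:ℝ) := by exact_mod_cast hd
    linarith
  have hdd : (2:ℝ) ≤ (d:ℝ) := by exact_mod_cast hd
  have hc : (0:ℝ) < ((eval a f) ^ 2)⁻¹ := by positivity
  set Q := polyHess f a with hQdef
  set G := polyGrad f a with hGdef
  have hQa : Q *ᵥ a = ((d : ℝ) - 1) • G := hessian_mulVec hd1 hf a
  have hherm := hess_herm f a
  constructor
  · rintro ⟨-, hpd⟩ x hx hxa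
    have hxg : x ⬝ᵥ G = 0 := by
      rw [hQa, dotProduct_smul, smul_eq_mul] at hxa
      rcases mul_eq_zero.1 hxa with h | h
      · linarith
      · exact h
    have hq := hpd.dotProduct_mulVec_pos hx
    rw [show star x = x from funext fun i => star_trivial _] at hq
    rw [quadM f a x, hxg] at hq
    rw [← hQdef] at hq
    have hS : 0 < (0:ℝ)^2 - eval a f * (x ⬝ᵥ (Q *ᵥ x)) := by
      by_contra hcon
      push_neg at hcon
      have := mul_nonpos_of_nonneg_of_nonpos (le_of_lt hc) hcon
      linarith
    nlinarith [hS]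
  · intro hcond
    refine ⟨hfa, Matrix.PosDef.of_dotProduct_mulVec_pos (logHess_herm f a) fun x hx => ?_⟩
    rw [show star x = x from funext fun i => star_trivial _, quadM f a x]
    have hmain : (eval a f) * (x ⬝ᵥ (Q *ᵥ x)) < (x ⬝ᵥ G) ^ 2 := by
      set F := eval a f with hF
      set α := a ⬝ᵥ (Q *ᵥ a) with hα
      have hαval : α = ((d:ℝ) - 1) * (d * F) := by
        rw [hα, hQa, dotProduct_smul, smul_eq_mul, grad_dot hf]
      have hαpos : 0 < α := by rw [hαval]; positivity
      set t := (x ⬝ᵥ (Q *ᵥ a)) / α with ht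
      have hteq : x ⬝ᵥ (Q *ᵥ a) = t * α := by
        rw [ht]; field_simp
      have hxg : x ⬝ᵥ G = t * (d * F) := by
        have h1 : ((d:ℝ) - 1) * (x ⬝ᵥ G) = ((d:ℝ) - 1) * (t * (d * F)) := by
          rw [show ((d:ℝ) - 1) * (x ⬝ᵥ G) = x ⬝ᵥ (Q *ᵥ a) from by
            rw [hQa, dotProduct_smul, smul_eq_mul], hteq, hαval]
          ring
        exact mul_left_cancel₀ (ne_of_gt he) h1
      set h := x - t • a with hh
      have hxeq : x = h + t • a := by rw [hh]; abel
      have hha : h ⬝ᵥ (Q *ᵥ a) = 0 := by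
        rw [hh, sub_dotProduct, smul_dotProduct, hteq, ← hα, smul_eq_mul]
        ring
      have hah : a ⬝ᵥ (Q *ᵥ h) = 0 := by rw [dot_symm hherm]; exact hha
      have hexp : x ⬝ᵥ (Q *ᵥ x) = h ⬝ᵥ (Q *ᵥ h) + t * t * α := by
        have e1 : x ⬝ᵥ (Q *ᵥ x) = h ⬝ᵥ (Q *ᵥ h) + t * (h ⬝ᵥ (Q *ᵥ a))
            + t * (a ⬝ᵥ (Q *ᵥ h)) + t * t * (a ⬝ᵥ (Q *ᵥ a)) := by
          conv_lhs => rw [hxeq]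
          rw [Matrix.mulVec_add, Matrix.mulVec_smul, dotProduct_add, add_dotProduct,
            add_dotProduct, dotProduct_smul, smul_dotProduct, smul_dotProduct, dotProduct_smul]
          simp only [smul_eq_mul]
          ring
        rw [e1, hha, hah, ← hα]
        ring
      have hQh : h ⬝ᵥ (Q *ᵥ h) ≤ 0 := by
        rcases eq_or_ne h 0 with h0 | hne
        · rw [h0]; simp
        · exact le_of_lt (hcond h hne hha)
      rcases eq_or_ne t 0 with ht0 | htne
      · have hne : h ≠ 0 := by
          rw [hh, ht0]; simpa using hx
        have hstrict := hcond h hne hha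
        rw [hexp, hxg, ht0]
        nlinarith [hstrict, hfa]
      · have ht2 : 0 < t * t := mul_self_pos.2 htne
        rw [hexp, hxg, hαval]
        nlinarith [hQh, ht2, hfa, hdd,
          mul_pos ht2 (mul_pos (lt_of_lt_of_le zero_lt_two hdd) (mul_pos hfa hfa))]
    simp only [hQdef, hGdef] at hmain
    exact mul_pos hc (sub_pos.2 hmain)

lemma ptwise2 {n d : ℕ} {f : MvPolynomial (Fin n) ℝ} (hd : 2 ≤ d) (hf : f.IsHomogeneous d)
    {a : Fin n → ℝ} (hfa : 0 < MvPolynomial.eval a f) :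
    (∀ x : Fin n → ℝ, x ≠ 0 →
      x ⬝ᵥ (polyHess f a *ᵥ a) = 0 → x ⬝ᵥ (polyHess f a *ᵥ x) < 0) ↔
    ((polyHess f a).det ≠ 0 ∧ posEigCount (polyHess f a) = 1) := by
  have hd1 : 1 ≤ d := le_trans (by norm_num) hd
  have he : (0:ℝ) < (d:ℝ) - 1 := by
    have : (2:ℝ) ≤ (d:ℝ) := by exact_mod_cast hd
    linarith
  have ha : 0 < a ⬝ᵥ (polyHess f a *ᵥ a) := by
    rw [hessian_mulVec hd1 hf a, dotProduct_smul, smul_eq_mul, grad_dot hf]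
    have hd0 : (0:ℝ) < (d:ℝ) := by positivity
    positivity
  exact la_key (hess_herm f a) ha

/-- Equivalent characterizations of strict log-concavity of a form of degree
`d ≥ 2` at every nonzero point of a proper convex cone `K`, assuming `f > 0` on the nonzero
points of `K`. -/
theorem stmt10 {n d : ℕ} (hd : 2 ≤ d) (f : MvPolynomial (Fin n) ℝ)
    (hf : f.IsHomogeneous d) (K : Set (Fin n → ℝ)) (hK : IsProperCone K)
    (hpos : ∀ a ∈ K, a ≠ 0 → 0 < eval a f) :
    List.TFAE
      [∀ a ∈ K, a ≠ 0 → StrictLogConcaveAt f a,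
       ∀ a ∈ K, a ≠ 0 → ∀ x : Fin n → ℝ, x ≠ 0 →
         x ⬝ᵥ (polyHess f a *ᵥ a) = 0 → x ⬝ᵥ (polyHess f a *ᵥ x) < 0,
       ∀ a ∈ K, a ≠ 0 → (polyHess f a).det ≠ 0 ∧ posEigCount (polyHess f a) = 1] := by
  tfae_have 1 ↔ 2 := by
    constructor
    · intro h1 a ha hne
      exact (ptwise1 hd hf (hpos a ha hne)).1 (h1 a ha hne)
    · intro h2 a ha hne
      exact (ptwise1 hd hf (hpos a ha hne)).2 (h2 a ha hne)
  tfae_have 2 ↔ 3 := by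
    constructor
    · intro h2 a ha hne
      exact (ptwise2 hd hf (hpos a ha hne)).1 (h2 a ha hne)
    · intro h3 a ha hne
      exact (ptwise2 hd hf (hpos a ha hne)).2 (h3 a ha hne)
  tfae_finish
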